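/- Let m = 808017424794512875886459904961710757005754368000000000 (the order of the Monster group). For every divisor d of 70·7^5, set x = 71·d. Then x divides m, and m/x ≡ 1 (mod 71) holds if and only if x = 2485. -/
import Mathlib


set_option maxRecDepth 4000 in
/-- Sylow-counting step for the normalizer of a cyclic subgroup of order 71
in the Monster group. -/
theorem stmt_9 (d : ℕ) (hd : d ∣ 70 * 7 ^ 5) :
    let m : ℕ := 808017424794512875886459904961710757005754368000000000
    let x : ℕ := 71 * d
    (x ∣ m) ∧ ((m / x) % 71 = 1 ↔ x = 2485) := by
  show 71 * d ∣ 808017424794512875886459904961710757005754368000000000 ∧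
    (808017424794512875886459904961710757005754368000000000 / (71 * d) % 71 = 1 ↔ 71 * d = 2485)
  obtain ⟨a, b, ha, hb, rfl⟩ := exists_dvd_and_dvd_of_dvd_mul hd
  obtain ⟨i, hi, rfl⟩ := (Nat.dvd_prime_pow (by norm_num)).mp hb
  have h70 := Nat.le_of_dvd (by norm_num) ha
  have h1 := Nat.pos_of_dvd_of_pos ha (by norm_num)
  interval_cases i <;> interval_cases a <;> revert ha <;> decide
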